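/- Let n ≥ 1 and z ∈ ℂ∖ℝ. Suppose m, m' ≥ 0 are integers, τ₁, …, τ_l and σ₁, …, σ_{l'} are Hermitian projections of ℂⁿ, each different from 0 and from I, with range τ_j ∩ (range τ_{j−1})^⊥ = {0} for 2 ≤ j ≤ l and range σ_j ∩ (range σ_{j−1})^⊥ = {0} for 2 ≤ j ≤ l'. If ((λ − conj(z))/(λ − z))^m · g_{z,τ_l}(λ)⋯g_{z,τ_1}(λ) = ((λ − conj(z))/(λ − z))^{m'} · g_{z,σ_{l'}}(λ)⋯g_{z,σ_1}(λ) for all λ ∈ ℂ∖{z, conj(z)}, then m = m', l = l', and τ_j = σ_j for every 1 ≤ j ≤ l. -/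

import Mathlib

open Matrix Complex Filter

noncomputable section

/-- A Hermitian projection of ℂⁿ: a matrix with π* = π and π² = π. -/
def IsHermitianProj {n : ℕ} (π : Matrix (Fin n) (Fin n) ℂ) : Prop :=
  πᴴ = π ∧ π * π = π

/-- The simple element g_{z,π}(λ) = I + ((z - conj z)/(λ - z))·(I - π). -/
def simpleElt {n : ℕ} (z : ℂ) (π : Matrix (Fin n) (Fin n) ℂ) (lam : ℂ) :
    Matrix (Fin n) (Fin n) ℂ :=
  1 + ((z - (starRingEnd ℂ) z) / (lam - z)) • (1 - π)

/-- The range of the linear map ℂⁿ → ℂⁿ defined by a matrix. -/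
def mrange {n m : ℕ} (A : Matrix (Fin n) (Fin m) ℂ) :
    Submodule ℂ (EuclideanSpace ℂ (Fin n)) :=
  LinearMap.range (Matrix.toEuclideanLin A)

namespace Statement8Aux

abbrev Mn (n : ℕ) := Matrix (Fin n) (Fin n) ℂ

variable {n : ℕ}

/-! ### Linear algebra preliminaries -/

lemma teL_mul (A B : Mn n) :
    Matrix.toEuclideanLin (A * B)
      = (Matrix.toEuclideanLin A) ∘ₗ (Matrix.toEuclideanLin B) := by
  ext v
  simp [Matrix.toEuclideanLin_apply, Matrix.mulVec_mulVec]

lemma teL_one : Matrix.toEuclideanLin (1 : Mn n) = LinearMap.id := by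
  ext v
  simp [Matrix.toEuclideanLin_apply]

lemma mrange_eq_bot {π : Mn n} : mrange π = ⊥ ↔ π = 0 := by
  rw [mrange, LinearMap.range_eq_bot]
  constructor
  · intro h
    have := (Matrix.toEuclideanLin (𝕜 := ℂ) (m := Fin n) (n := Fin n)).injective
    apply this
    rw [h, map_zero]
  · rintro rfl; rw [map_zero]

lemma one_sub_mul_self {π : Mn n} (h : π * π = π) : (1 - π) * (1 - π) = 1 - π := by
  rw [sub_mul, one_mul, mul_sub, mul_one, h]
  abel

lemma mul_one_sub_self {π : Mn n} (h : π * π = π) : π * (1 - π) = 0 := by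
  rw [mul_sub, mul_one, h, sub_self]

lemma one_sub_mul_self' {π : Mn n} (h : π * π = π) : (1 - π) * π = 0 := by
  rw [sub_mul, one_mul, h, sub_self]

lemma ker_one_sub {π : Mn n} (hπ : IsHermitianProj π) :
    LinearMap.ker (Matrix.toEuclideanLin (1 - π)) = mrange π := by
  ext v
  simp only [LinearMap.mem_ker, mrange, LinearMap.mem_range]
  constructor
  · intro h
    refine ⟨v, ?_⟩
    have h2 : Matrix.toEuclideanLin (1 - π) v
        = v - Matrix.toEuclideanLin π v := by
      rw [map_sub, teL_one]; rfl
    rw [h2] at h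
    have := sub_eq_zero.mp h
    exact this.symm
  · rintro ⟨u, rfl⟩
    have : Matrix.toEuclideanLin (1 - π) (Matrix.toEuclideanLin π u)
        = Matrix.toEuclideanLin ((1 - π) * π) u := by
      rw [teL_mul]; rfl
    rw [this, one_sub_mul_self' hπ.2, map_zero]
    rfl

lemma ker_proj {π : Mn n} (hπ : IsHermitianProj π) :
    LinearMap.ker (Matrix.toEuclideanLin π) = mrange (1 - π) := by
  have h2 : IsHermitianProj (1 - π) := by
    constructor
    · rw [conjTranspose_sub, conjTranspose_one, hπ.1]
    · exact one_sub_mul_self hπ.2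
  have := ker_one_sub h2
  rw [sub_sub_cancel] at this
  exact this

lemma range_one_sub_le {π : Mn n} (hπ : IsHermitianProj π) :
    mrange (1 - π) ≤ (mrange π)ᗮ := by
  rintro x ⟨v, rfl⟩
  rw [Submodule.mem_orthogonal]
  rintro y ⟨u, rfl⟩
  have hadj : (inner ℂ (Matrix.toEuclideanLin π u) (Matrix.toEuclideanLin (1 - π) v) : ℂ)
      = inner ℂ u (Matrix.toEuclideanLin π (Matrix.toEuclideanLin (1 - π) v)) := by
    rw [show Matrix.toEuclideanLin π
        = LinearMap.adjoint (Matrix.toEuclideanLin π) from by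
      rw [← Matrix.toEuclideanLin_conjTranspose_eq_adjoint, hπ.1], LinearMap.adjoint_inner_left,
      ← Matrix.toEuclideanLin_conjTranspose_eq_adjoint, hπ.1]
  rw [hadj]
  have : Matrix.toEuclideanLin π (Matrix.toEuclideanLin (1 - π) v)
      = Matrix.toEuclideanLin (π * (1 - π)) v := by rw [teL_mul]; rfl
  rw [this, mul_one_sub_self hπ.2, map_zero]
  simp

lemma proj_eq_of_mrange_eq {π ρ : Mn n} (hπ : IsHermitianProj π)
    (hρ : IsHermitianProj ρ) (h : mrange π = mrange ρ) : π = ρ := by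
  have hinj := (Matrix.toEuclideanLin (𝕜 := ℂ) (m := Fin n) (n := Fin n)).injective
  apply hinj
  ext v : 1
  set d := Matrix.toEuclideanLin π v - Matrix.toEuclideanLin ρ v with hd
  have hd1 : d ∈ mrange π := by
    apply Submodule.sub_mem
    · exact ⟨v, rfl⟩
    · rw [h]; exact ⟨v, rfl⟩
  have hd2 : d ∈ (mrange π)ᗮ := by
    have e1 : Matrix.toEuclideanLin (1 - ρ) v = v - Matrix.toEuclideanLin ρ v := by
      rw [map_sub, teL_one]; rfl
    have e2 : Matrix.toEuclideanLin (1 - π) v = v - Matrix.toEuclideanLin π v := by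
      rw [map_sub, teL_one]; rfl
    have : d = Matrix.toEuclideanLin (1 - ρ) v - Matrix.toEuclideanLin (1 - π) v := by
      rw [e1, e2, hd]; abel
    rw [this]
    apply Submodule.sub_mem
    · have := range_one_sub_le hρ
      rw [← h] at this
      exact this ⟨v, rfl⟩
    · exact range_one_sub_le hπ ⟨v, rfl⟩
  have : d = 0 := by
    have := (Submodule.orthogonal_disjoint (mrange π)).le_bot ⟨hd1, hd2⟩
    simpa using this
  exact sub_eq_zero.mp this

lemma proj_eq_one_of_mrange_top {π : Mn n} (hπ : IsHermitianProj π)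
    (h : mrange π = ⊤) : π = 1 := by
  have hinj := (Matrix.toEuclideanLin (𝕜 := ℂ) (m := Fin n) (n := Fin n)).injective
  apply hinj
  rw [teL_one]
  ext v : 1
  have hv : v ∈ mrange π := h ▸ Submodule.mem_top
  obtain ⟨u, hu⟩ := hv
  have : Matrix.toEuclideanLin π (Matrix.toEuclideanLin π u)
      = Matrix.toEuclideanLin (π * π) u := by rw [teL_mul]; rfl
  calc Matrix.toEuclideanLin π v = Matrix.toEuclideanLin π (Matrix.toEuclideanLin π u) := by
        rw [hu]
    _ = Matrix.toEuclideanLin (π * π) u := this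
    _ = Matrix.toEuclideanLin π u := by rw [hπ.2]
    _ = v := hu
    _ = LinearMap.id v := rfl

/-! ### Products of matrices -/

/-- Polynomial version of the simple element: (λ-z)·g_{z,π}(λ). -/
def polyElt (z : ℂ) (π : Mn n) (lam : ℂ) : Mn n :=
  (lam - z) • (1 : Mn n) + (z - (starRingEnd ℂ) z) • (1 - π)

def Pprod (z : ℂ) {l : ℕ} (τ : Fin l → Mn n) (lam : ℂ) : Mn n :=
  (List.ofFn fun j => polyElt z (τ j) lam).reverse.prod

def Tprod {l : ℕ} (τ : Fin l → Mn n) : Mn n :=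
  (List.ofFn fun j => (1 - τ j)).reverse.prod

lemma reverse_ofFn_prod_succ {R : Type*} [Monoid R] {l : ℕ} (f : Fin (l + 1) → R) :
    (List.ofFn f).reverse.prod = (List.ofFn fun i => f i.succ).reverse.prod * f 0 := by
  simp [List.ofFn_succ]

lemma smul_reverse_ofFn_prod {l : ℕ} (r : ℂ) (f : Fin l → Mn n) :
    (List.ofFn fun j => r • f j).reverse.prod = r ^ l • (List.ofFn f).reverse.prod := by
  induction l with
  | zero => simp
  | succ k ih =>
    rw [reverse_ofFn_prod_succ (fun j => r • f j), reverse_ofFn_prod_succ f,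
      ih (fun i => f i.succ), smul_mul_assoc, mul_smul_comm, smul_smul, pow_succ]

lemma simpleElt_eq {z lam : ℂ} (π : Mn n) (h : lam ≠ z) :
    simpleElt z π lam = (lam - z)⁻¹ • polyElt z π lam := by
  have h0 : lam - z ≠ 0 := sub_ne_zero.2 h
  unfold simpleElt polyElt
  rw [smul_add, smul_smul, smul_smul, inv_mul_cancel₀ h0, one_smul]
  congr 2
  rw [div_eq_mul_inv, mul_comm]

lemma sprod_eq (z : ℂ) {l : ℕ} (τ : Fin l → Mn n) {lam : ℂ} (h : lam ≠ z) :
    (List.ofFn fun j : Fin l => simpleElt z (τ j) lam).reverse.prod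
      = ((lam - z)⁻¹) ^ l • Pprod z τ lam := by
  unfold Pprod
  rw [show (fun j : Fin l => simpleElt z (τ j) lam)
      = fun j => (lam - z)⁻¹ • polyElt z (τ j) lam from
    funext fun j => simpleElt_eq (τ j) h]
  exact smul_reverse_ofFn_prod _ _

lemma Pprod_at (z : ℂ) {l : ℕ} (τ : Fin l → Mn n) :
    Pprod z τ z = (z - (starRingEnd ℂ) z) ^ l • Tprod τ := by
  unfold Pprod Tprod
  rw [show (fun j : Fin l => polyElt z (τ j) z)
      = fun j => (z - (starRingEnd ℂ) z) • (1 - τ j) from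
    funext fun j => by unfold polyElt; rw [sub_self, zero_smul, zero_add]]
  exact smul_reverse_ofFn_prod _ _

lemma continuous_polyElt (z : ℂ) (π : Mn n) : Continuous fun lam => polyElt z π lam := by
  unfold polyElt
  exact ((continuous_id.sub continuous_const).smul continuous_const).add continuous_const

lemma continuous_Pprod (z : ℂ) : ∀ {l : ℕ} (τ : Fin l → Mn n),
    Continuous fun lam => Pprod z τ lam := by
  intro l
  induction l with
  | zero =>
    intro τ
    simp only [Pprod, List.ofFn_zero, List.reverse_nil, List.prod_nil]
    exact continuous_const
  | succ k ih =>
    intro τ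
    have e : (fun lam => Pprod z τ lam) = fun lam =>
        Pprod z (fun i => τ i.succ) lam * polyElt z (τ 0) lam := by
      funext lam
      exact reverse_ofFn_prod_succ _
    rw [e]
    exact (ih _).matrix_mul (continuous_polyElt z (τ 0))

/-! ### Analytic lemmas -/

lemma ext_two {z z' : ℂ} {f g : ℂ → Mn n} (hf : Continuous f) (hg : Continuous g)
    (h : ∀ lam, lam ≠ z → lam ≠ z' → f lam = g lam) : f = g := by
  have hd : Dense ({z, z'} : Set ℂ)ᶜ :=
    Set.Countable.dense_compl ℂ ((Set.countable_singleton z').insert z)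
  refine Continuous.ext_on hd hf hg ?_
  intro x hx
  simp only [Set.mem_compl_iff, Set.mem_insert_iff, Set.mem_singleton_iff, not_or] at hx
  exact h x hx.1 hx.2

lemma key_le {z z' : ℂ} {f g : ℂ → Mn n} (hf : Continuous f) (hg : Continuous g)
    {a b : ℕ} (hab : a ≤ b)
    (h : ∀ lam, lam ≠ z → lam ≠ z' → (lam - z) ^ a • f lam = (lam - z) ^ b • g lam)
    (hfz : f z ≠ 0) : a = b ∧ f z = g z := by
  have h2 : ∀ lam, lam ≠ z → lam ≠ z' → f lam = (lam - z) ^ (b - a) • g lam := by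
    intro lam h1 h1'
    have hne : ((lam - z) ^ a : ℂ) ≠ 0 := pow_ne_zero _ (sub_ne_zero.2 h1)
    apply smul_right_injective (Mn n) hne
    show (lam - z) ^ a • f lam = (lam - z) ^ a • ((lam - z) ^ (b - a) • g lam)
    rw [h lam h1 h1', smul_smul, ← pow_add, Nat.add_sub_cancel' hab]
  have hfg : f = fun lam => (lam - z) ^ (b - a) • g lam :=
    ext_two hf ((((continuous_id.sub continuous_const).pow _)).smul hg) h2
  have hz2 := congrFun hfg z
  rw [sub_self] at hz2
  rcases Nat.eq_or_lt_of_le hab with he | hlt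
  · refine ⟨he, ?_⟩
    rw [hz2, he, Nat.sub_self, pow_zero, one_smul]
  · exfalso
    apply hfz
    rw [hz2, zero_pow (by omega), zero_smul]

lemma key {z z' : ℂ} {f g : ℂ → Mn n} (hf : Continuous f) (hg : Continuous g)
    {a b : ℕ}
    (h : ∀ lam, lam ≠ z → lam ≠ z' → (lam - z) ^ a • f lam = (lam - z) ^ b • g lam)
    (hfz : f z ≠ 0) (hgz : g z ≠ 0) : a = b ∧ f z = g z := by
  rcases le_total a b with hab | hab
  · exact key_le hf hg hab h hfz
  · obtain ⟨e1, e2⟩ := key_le hg hf hab (fun lam h1 h2 => (h lam h1 h2).symm) hgz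
    exact ⟨e1.symm, e2.symm⟩

/-! ### Kernel of the leading coefficient -/

lemma ker_Tprod : ∀ {l : ℕ} (τ : Fin (l + 1) → Mn n)
    (_ : ∀ j, IsHermitianProj (τ j))
    (_ : ∀ i j : Fin (l + 1), (i : ℕ) + 1 = (j : ℕ) →
      mrange (τ j) ⊓ (mrange (τ i))ᗮ = ⊥),
    LinearMap.ker (Matrix.toEuclideanLin (Tprod τ)) = mrange (τ 0) := by
  intro l
  induction l with
  | zero =>
    intro τ hτ _
    have e : Tprod τ = 1 - τ 0 := by
      simp [Tprod, List.ofFn_succ]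
    rw [e, ker_one_sub (hτ 0)]
  | succ k ih =>
    intro τ hτ hmin
    have e : Tprod τ = Tprod (fun i : Fin (k + 1) => τ i.succ) * (1 - τ 0) :=
      reverse_ofFn_prod_succ _
    have hτ' : ∀ j : Fin (k + 1), IsHermitianProj (τ j.succ) := fun j => hτ j.succ
    have hmin' : ∀ i j : Fin (k + 1), (i : ℕ) + 1 = (j : ℕ) →
        mrange (τ j.succ) ⊓ (mrange (τ i.succ))ᗮ = ⊥ := by
      intro i j hij
      exact hmin i.succ j.succ (by simp [Fin.val_succ]; omega)
    have hker := ih (fun i => τ i.succ) hτ' hmin'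
    rw [e, teL_mul]
    ext v
    simp only [LinearMap.mem_ker, LinearMap.comp_apply]
    constructor
    · intro hv
      have hu1 : Matrix.toEuclideanLin (1 - τ 0) v
          ∈ LinearMap.ker (Matrix.toEuclideanLin (Tprod fun i : Fin (k+1) => τ i.succ)) := hv
      rw [hker] at hu1
      have hu2 : Matrix.toEuclideanLin (1 - τ 0) v ∈ (mrange (τ 0))ᗮ :=
        range_one_sub_le (hτ 0) ⟨v, rfl⟩
      have h01 : ((0 : Fin (k + 2)) : ℕ) + 1 = (((0 : Fin (k+1)).succ : Fin (k+2)) : ℕ) := by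
        simp
      have hbot := hmin 0 ((0 : Fin (k+1)).succ) h01
      have : Matrix.toEuclideanLin (1 - τ 0) v ∈
          mrange (τ ((0 : Fin (k+1)).succ)) ⊓ (mrange (τ 0))ᗮ := ⟨hu1, hu2⟩
      rw [hbot] at this
      have hz : Matrix.toEuclideanLin (1 - τ 0) v = 0 := by simpa using this
      have : v ∈ LinearMap.ker (Matrix.toEuclideanLin (1 - τ 0)) := hz
      rw [ker_one_sub (hτ 0)] at this
      exact this
    · intro hv
      have : v ∈ LinearMap.ker (Matrix.toEuclideanLin (1 - τ 0)) := by
        rw [ker_one_sub (hτ 0)]; exact hv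
      have hz : Matrix.toEuclideanLin (1 - τ 0) v = 0 := this
      rw [hz, map_zero]

lemma Tprod_ne_zero (hn : 1 ≤ n) {l : ℕ} (τ : Fin l → Mn n)
    (hτ : ∀ j, IsHermitianProj (τ j) ∧ τ j ≠ 0 ∧ τ j ≠ 1)
    (hmin : ∀ i j : Fin l, (i : ℕ) + 1 = (j : ℕ) →
      mrange (τ j) ⊓ (mrange (τ i))ᗮ = ⊥) :
    Tprod τ ≠ 0 := by
  cases l with
  | zero =>
    have e : Tprod τ = 1 := by simp [Tprod]
    rw [e]
    intro h
    have h2 := congr_fun (congr_fun h ⟨0, hn⟩) ⟨0, hn⟩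
    rw [Matrix.one_apply_eq] at h2
    exact one_ne_zero h2
  | succ k =>
    intro h0
    have hker := ker_Tprod τ (fun j => (hτ j).1) hmin
    rw [h0, map_zero, LinearMap.ker_zero] at hker
    have : τ 0 = 1 := proj_eq_one_of_mrange_top (hτ 0).1 hker.symm
    exact (hτ 0).2.2 this

/-! ### The key comparison -/

lemma key_T (hn : 1 ≤ n) {z : ℂ} (hz : z.im ≠ 0) {l l' m m' : ℕ}
    (τ : Fin l → Mn n) (σ : Fin l' → Mn n)
    (hτ : ∀ j, IsHermitianProj (τ j) ∧ τ j ≠ 0 ∧ τ j ≠ 1)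
    (hσ : ∀ j, IsHermitianProj (σ j) ∧ σ j ≠ 0 ∧ σ j ≠ 1)
    (hminτ : ∀ i j : Fin l, (i : ℕ) + 1 = (j : ℕ) →
      mrange (τ j) ⊓ (mrange (τ i))ᗮ = ⊥)
    (hminσ : ∀ i j : Fin l', (i : ℕ) + 1 = (j : ℕ) →
      mrange (σ j) ⊓ (mrange (σ i))ᗮ = ⊥)
    (heq : ∀ lam : ℂ, lam ≠ z → lam ≠ (starRingEnd ℂ) z →
      ((lam - (starRingEnd ℂ) z) / (lam - z)) ^ m •
          (List.ofFn fun j : Fin l => simpleElt z (τ j) lam).reverse.prod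
        = ((lam - (starRingEnd ℂ) z) / (lam - z)) ^ m' •
            (List.ofFn fun j : Fin l' => simpleElt z (σ j) lam).reverse.prod) :
    m + l = m' + l' ∧ Tprod τ = Tprod σ := by
  set zb := (starRingEnd ℂ) z with hzb
  have hw : z - zb ≠ 0 := by
    rw [hzb, Complex.sub_conj]
    simp [Complex.ext_iff, hz]
  have heq2 : ∀ lam, lam ≠ z → lam ≠ zb →
      (lam - z) ^ (m' + l') • ((fun mu => (mu - zb) ^ m • Pprod z τ mu) lam)
        = (lam - z) ^ (m + l) • ((fun mu => (mu - zb) ^ m' • Pprod z σ mu) lam) := by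
    intro lam h1 h2
    have h0 : (lam - z) ≠ 0 := sub_ne_zero.2 h1
    have e := heq lam h1 h2
    rw [sprod_eq z τ h1, sprod_eq z σ h1, smul_smul, smul_smul] at e
    simp only [smul_smul]
    have c1 : (lam - z) ^ (m' + l') * ((lam - zb) ^ m)
        = ((lam - z) ^ (m + l + (m' + l'))) *
          (((lam - zb) / (lam - z)) ^ m * ((lam - z)⁻¹) ^ l) := by
      rw [div_pow, inv_pow]
      field_simp
      ring
    have c2 : (lam - z) ^ (m + l) * ((lam - zb) ^ m')
        = ((lam - z) ^ (m + l + (m' + l'))) *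
          (((lam - zb) / (lam - z)) ^ m' * ((lam - z)⁻¹) ^ l') := by
      rw [div_pow, inv_pow]
      field_simp
      ring
    have e2 := congrArg (fun X => (lam - z) ^ (m + l + (m' + l')) • X) e
    simp only [smul_smul] at e2
    rw [c1, c2]
    exact e2
  have hfz : (fun mu => (mu - zb) ^ m • Pprod z τ mu) z ≠ 0 := by
    simp only
    rw [Pprod_at, smul_smul, ← pow_add]
    exact smul_ne_zero (pow_ne_zero _ hw) (Tprod_ne_zero hn τ hτ hminτ)
  have hgz : (fun mu => (mu - zb) ^ m' • Pprod z σ mu) z ≠ 0 := by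
    simp only
    rw [Pprod_at, smul_smul, ← pow_add]
    exact smul_ne_zero (pow_ne_zero _ hw) (Tprod_ne_zero hn σ hσ hminσ)
  have hf : Continuous fun mu => (mu - zb) ^ m • Pprod z τ mu :=
    (((continuous_id.sub continuous_const).pow _)).smul (continuous_Pprod z τ)
  have hg : Continuous fun mu => (mu - zb) ^ m' • Pprod z σ mu :=
    (((continuous_id.sub continuous_const).pow _)).smul (continuous_Pprod z σ)
  obtain ⟨hab, hv⟩ := key hf hg heq2 hfz hgz
  refine ⟨by omega, ?_⟩
  rw [Pprod_at, Pprod_at, smul_smul, smul_smul, ← pow_add, ← pow_add] at hv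
  have : m' + l' = m + l := by omega
  rw [this] at hv
  exact smul_right_injective (Mn n) (pow_ne_zero _ hw) hv

/-! ### Right inverse of a simple element -/

lemma ginv {π : Mn n} (hπ2 : π * π = π) {z lam : ℂ} (h1 : lam ≠ z)
    (h2 : lam ≠ (starRingEnd ℂ) z) :
    simpleElt z π lam *
      (1 + (((starRingEnd ℂ) z - z) / (lam - (starRingEnd ℂ) z)) • (1 - π)) = 1 := by
  set zb := (starRingEnd ℂ) z with hzb
  have h0 : lam - z ≠ 0 := sub_ne_zero.2 h1
  have h0' : lam - zb ≠ 0 := sub_ne_zero.2 h2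
  set a := (z - zb) / (lam - z) with ha
  set b := (zb - z) / (lam - zb) with hb
  have hQ : (1 - π) * (1 - π) = 1 - π := one_sub_mul_self hπ2
  have expand : (1 + a • (1 - π)) * (1 + b • (1 - π))
      = 1 + (a + b + a * b) • (1 - π) := by
    simp only [mul_add, add_mul, one_mul, mul_one, smul_mul_assoc, mul_smul_comm,
      smul_smul, hQ, add_smul, smul_add]
    module
  have hab : a + b + a * b = 0 := by
    rw [ha, hb]
    field_simp
    ring
  rw [show simpleElt z π lam = 1 + a • (1 - π) from rfl, expand, hab, zero_smul, add_zero]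

/-! ### Main induction -/

theorem main_aux (hn : 1 ≤ n) (z : ℂ) (hz : z.im ≠ 0) :
    ∀ (l : ℕ) {l' m m' : ℕ} (τ : Fin l → Mn n) (σ : Fin l' → Mn n)
    (_ : ∀ j, IsHermitianProj (τ j) ∧ τ j ≠ 0 ∧ τ j ≠ 1)
    (_ : ∀ j, IsHermitianProj (σ j) ∧ σ j ≠ 0 ∧ σ j ≠ 1)
    (_ : ∀ i j : Fin l, (i : ℕ) + 1 = (j : ℕ) →
      mrange (τ j) ⊓ (mrange (τ i))ᗮ = ⊥)
    (_ : ∀ i j : Fin l', (i : ℕ) + 1 = (j : ℕ) →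
      mrange (σ j) ⊓ (mrange (σ i))ᗮ = ⊥)
    (_ : ∀ lam : ℂ, lam ≠ z → lam ≠ (starRingEnd ℂ) z →
      ((lam - (starRingEnd ℂ) z) / (lam - z)) ^ m •
          (List.ofFn fun j : Fin l => simpleElt z (τ j) lam).reverse.prod
        = ((lam - (starRingEnd ℂ) z) / (lam - z)) ^ m' •
            (List.ofFn fun j : Fin l' => simpleElt z (σ j) lam).reverse.prod),
    m = m' ∧ ∃ h : l = l', ∀ j : Fin l, τ j = σ (Fin.cast h j) := by
  intro l
  induction l with
  | zero =>
    intro l' m m' τ σ hτ hσ hminτ hminσ heq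
    obtain ⟨hml, hT⟩ := key_T hn hz τ σ hτ hσ hminτ hminσ heq
    cases l' with
    | zero =>
      refine ⟨by omega, rfl, fun j => j.elim0⟩
    | succ k =>
      exfalso
      have hTτ : Tprod τ = 1 := by simp [Tprod]
      rw [hTτ] at hT
      have hker := ker_Tprod σ (fun j => (hσ j).1) hminσ
      rw [← hT, teL_one, LinearMap.ker_id] at hker
      exact (hσ 0).2.1 (mrange_eq_bot.mp hker.symm)
  | succ k ih =>
    intro l' m m' τ σ hτ hσ hminτ hminσ heq
    obtain ⟨hml, hT⟩ := key_T hn hz τ σ hτ hσ hminτ hminσ heq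
    cases l' with
    | zero =>
      exfalso
      have hTσ : Tprod σ = 1 := by simp [Tprod]
      rw [hTσ] at hT
      have hker := ker_Tprod τ (fun j => (hτ j).1) hminτ
      rw [hT, teL_one, LinearMap.ker_id] at hker
      exact (hτ 0).2.1 (mrange_eq_bot.mp hker.symm)
    | succ k' =>
      -- equality of the first projections
      have hkerτ := ker_Tprod τ (fun j => (hτ j).1) hminτ
      have hkerσ := ker_Tprod σ (fun j => (hσ j).1) hminσ
      have hr : mrange (τ 0) = mrange (σ 0) := by
        rw [← hkerτ, ← hkerσ, hT]
      have hts : τ 0 = σ 0 := proj_eq_of_mrange_eq (hτ 0).1 (hσ 0).1 hr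
      -- cancel the rightmost factor
      have heq' : ∀ lam : ℂ, lam ≠ z → lam ≠ (starRingEnd ℂ) z →
          ((lam - (starRingEnd ℂ) z) / (lam - z)) ^ m •
              (List.ofFn fun j : Fin k => simpleElt z (τ j.succ) lam).reverse.prod
            = ((lam - (starRingEnd ℂ) z) / (lam - z)) ^ m' •
                (List.ofFn fun j : Fin k' => simpleElt z (σ j.succ) lam).reverse.prod := by
        intro lam h1 h2
        have e := heq lam h1 h2
        rw [reverse_ofFn_prod_succ (fun j : Fin (k+1) => simpleElt z (τ j) lam),
          reverse_ofFn_prod_succ (fun j : Fin (k'+1) => simpleElt z (σ j) lam), ← hts] at e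
        have e2 := congrArg
          (· * (1 + (((starRingEnd ℂ) z - z) / (lam - (starRingEnd ℂ) z)) • (1 - τ 0))) e
        simp only [smul_mul_assoc, mul_assoc, ginv (hτ 0).1.2 h1 h2, mul_one] at e2
        exact e2
      obtain ⟨hm, hl, hcomp⟩ := ih (fun i => τ i.succ) (fun i => σ i.succ)
        (fun j => hτ j.succ) (fun j => hσ j.succ)
        (fun i j hij => hminτ i.succ j.succ (by simp [Fin.val_succ]; omega))
        (fun i j hij => hminσ i.succ j.succ (by simp [Fin.val_succ]; omega))
        heq'
      have hll : k + 1 = k' + 1 := by omega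
      refine ⟨hm, hll, ?_⟩
      intro j
      refine Fin.cases ?_ ?_ j
      · have : Fin.cast hll (0 : Fin (k+1)) = 0 := by
          apply Fin.ext; simp
        rw [this]
        exact hts
      · intro i
        have harg : Fin.cast hll i.succ = (Fin.cast hl i).succ := by
          apply Fin.ext; simp
        rw [harg]
        exact hcomp i

end Statement8Aux

/-- Uniqueness of the minimal factorization (Theorem 4.11, uniqueness part). -/
theorem statement8 {n : ℕ} (hn : 1 ≤ n) (z : ℂ) (hz : z.im ≠ 0)
    {m m' l l' : ℕ}
    (τ : Fin l → Matrix (Fin n) (Fin n) ℂ) (σ : Fin l' → Matrix (Fin n) (Fin n) ℂ)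
    (hτ : ∀ j, IsHermitianProj (τ j) ∧ τ j ≠ 0 ∧ τ j ≠ 1)
    (hσ : ∀ j, IsHermitianProj (σ j) ∧ σ j ≠ 0 ∧ σ j ≠ 1)
    (hminτ : ∀ i j : Fin l, (i : ℕ) + 1 = (j : ℕ) →
      mrange (τ j) ⊓ (mrange (τ i))ᗮ = ⊥)
    (hminσ : ∀ i j : Fin l', (i : ℕ) + 1 = (j : ℕ) →
      mrange (σ j) ⊓ (mrange (σ i))ᗮ = ⊥)
    (heq : ∀ lam : ℂ, lam ≠ z → lam ≠ (starRingEnd ℂ) z →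
      ((lam - (starRingEnd ℂ) z) / (lam - z)) ^ m •
          (List.ofFn fun j : Fin l => simpleElt z (τ j) lam).reverse.prod
        = ((lam - (starRingEnd ℂ) z) / (lam - z)) ^ m' •
            (List.ofFn fun j : Fin l' => simpleElt z (σ j) lam).reverse.prod) :
    m = m' ∧ ∃ h : l = l', ∀ j : Fin l, τ j = σ (Fin.cast h j) :=
  Statement8Aux.main_aux hn z hz l τ σ hτ hσ hminτ hminσ heq
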